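/- Let H : [0,π] → [0,π] be an increasing function such that H(π − θ) = π − H(θ) for all θ, H is superadditive (H(θ₁+θ₂) ≥ H(θ₁) + H(θ₂) whenever θ₁, θ₂, θ₁+θ₂ ∈ [0,π]), and for every convex function F : [0,π] → ℝ one has ∫₀^π F(H(θ)) sin θ dθ ≤ ∫₀^π F(θ) sin θ dθ. Then H(θ) = θ for all θ ∈ [0,π]. -/

import Mathlib

open Real Set MeasureTheory

private lemma intInt_of_bdd {f : ℝ → ℝ} (hf : Measurable f) {C : ℝ} (hb : ∀ x, |f x| ≤ C)
    (a b : ℝ) : IntervalIntegrable f volume a b := by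
  rw [intervalIntegrable_iff]
  exact Integrable.mono' (integrableOn_const measure_Ioc_lt_top.ne)
    hf.aestronglyMeasurable (ae_of_all _ hb)

theorem stmt_17 (H : ℝ → ℝ)
    (hmaps : Set.MapsTo H (Set.Icc 0 π) (Set.Icc 0 π))
    (hmono : MonotoneOn H (Set.Icc 0 π))
    (hsym : ∀ θ ∈ Set.Icc (0:ℝ) π, H (π - θ) = π - H θ)
    (hsuper : ∀ θ₁ θ₂ : ℝ, θ₁ ∈ Set.Icc (0:ℝ) π → θ₂ ∈ Set.Icc (0:ℝ) π →
      θ₁ + θ₂ ∈ Set.Icc (0:ℝ) π → H θ₁ + H θ₂ ≤ H (θ₁ + θ₂))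
    (hjensen : ∀ F : ℝ → ℝ, ConvexOn ℝ (Set.Icc 0 π) F →
      (∫ θ in (0:ℝ)..π, F (H θ) * Real.sin θ) ≤ ∫ θ in (0:ℝ)..π, F θ * Real.sin θ) :
    ∀ θ ∈ Set.Icc (0:ℝ) π, H θ = θ := by
  have hπ : (0:ℝ) < π := pi_pos
  have h2 : (0:ℝ) ≤ π/2 := by linarith
  have h2π : π/2 ≤ π := by linarith
  have h0mem : (0:ℝ) ∈ Icc (0:ℝ) π := ⟨le_rfl, hπ.le⟩
  have hhalfmem : π/2 ∈ Icc (0:ℝ) π := ⟨h2, h2π⟩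
  -- basic values
  have hH0 : H 0 = 0 := by
    have h1 := hsuper 0 0 h0mem h0mem (by simpa using h0mem)
    have h2' := (hmaps h0mem).1
    rw [add_zero] at h1
    linarith
  have hHhalf : H (π/2) = π/2 := by
    have h1 := hsym (π/2) hhalfmem
    rw [show π - π/2 = π/2 by ring] at h1
    linarith
  -- the clamped version of H, globally monotone hence measurable
  set G : ℝ → ℝ := fun x => H (max 0 (min x π)) with hGdef
  have hclamp : ∀ x : ℝ, max 0 (min x π) ∈ Icc (0:ℝ) π :=
    fun x => ⟨le_max_left _ _, max_le hπ.le (min_le_right _ _)⟩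
  have hGeq : ∀ θ ∈ Icc (0:ℝ) π, G θ = H θ := by
    intro θ hθ
    simp only [hGdef]
    rw [min_eq_left hθ.2, max_eq_right hθ.1]
  have hGmono : Monotone G := by
    intro x y hxy
    exact hmono (hclamp x) (hclamp y) (max_le_max le_rfl (min_le_min_right _ hxy))
  have hGmeas : Measurable G := hGmono.measurable
  -- H maps [0,π/2] to [0,π/2]
  have hHbd : ∀ θ ∈ Icc (0:ℝ) (π/2), H θ ∈ Icc (0:ℝ) (π/2) := by
    intro θ hθ
    have hθπ : θ ∈ Icc (0:ℝ) π := ⟨hθ.1, hθ.2.trans h2π⟩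
    exact ⟨(hmaps hθπ).1, hHhalf ▸ hmono hθπ hhalfmem hθ.2⟩
  -- measurability and integrability of all integrands
  have msin : Measurable Real.sin := Real.measurable_sin
  have mcos : Measurable Real.cos := Real.measurable_cos
  have m1 : Measurable (fun θ : ℝ => Real.sin (G θ) * Real.sin θ) :=
    (msin.comp hGmeas).mul msin
  have m2 : Measurable (fun θ : ℝ => Real.sin θ * Real.sin θ) := msin.mul msin
  have m3 : Measurable (fun θ : ℝ => Real.cos (G θ + θ)) :=
    mcos.comp (hGmeas.add measurable_id)
  have m3r : Measurable (fun θ : ℝ => Real.cos (G (π/2 - θ) + (π/2 - θ))) := by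
    have hs : Measurable (fun θ : ℝ => π/2 - θ) := measurable_const.sub measurable_id
    exact mcos.comp ((hGmeas.comp hs).add hs)
  have m4 : Measurable (fun θ : ℝ => 1 - Real.cos (G θ - θ)) :=
    measurable_const.sub (mcos.comp (hGmeas.sub measurable_id))
  have m5 : Measurable (fun θ : ℝ => Real.cos (2*θ)) :=
    mcos.comp (measurable_const.mul measurable_id)
  have bd1 : ∀ x : ℝ, |Real.sin (G x) * Real.sin x| ≤ (2:ℝ) := by
    intro x
    rw [abs_mul]
    calc |Real.sin (G x)| * |Real.sin x| ≤ 1 * 1 :=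
          mul_le_mul (Real.abs_sin_le_one _) (Real.abs_sin_le_one _) (abs_nonneg _) zero_le_one
      _ ≤ 2 := by norm_num
  have bd2 : ∀ x : ℝ, |Real.sin x * Real.sin x| ≤ (2:ℝ) := by
    intro x
    rw [abs_mul]
    calc |Real.sin x| * |Real.sin x| ≤ 1 * 1 :=
          mul_le_mul (Real.abs_sin_le_one _) (Real.abs_sin_le_one _) (abs_nonneg _) zero_le_one
      _ ≤ 2 := by norm_num
  have bdcos : ∀ y : ℝ, |Real.cos y| ≤ (2:ℝ) := fun y => (Real.abs_cos_le_one y).trans (by norm_num)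
  have bd4 : ∀ x : ℝ, |1 - Real.cos (G x - x)| ≤ (2:ℝ) := by
    intro x
    have h1 := Real.neg_one_le_cos (G x - x)
    have h2' := Real.cos_le_one (G x - x)
    rw [abs_le]; constructor <;> linarith
  have i1 : ∀ a b : ℝ, IntervalIntegrable (fun θ => Real.sin (G θ) * Real.sin θ) volume a b :=
    intInt_of_bdd m1 bd1
  have i2 : ∀ a b : ℝ, IntervalIntegrable (fun θ => Real.sin θ * Real.sin θ) volume a b :=
    intInt_of_bdd m2 bd2
  have i3 : ∀ a b : ℝ, IntervalIntegrable (fun θ => Real.cos (G θ + θ)) volume a b :=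
    intInt_of_bdd m3 (fun x => bdcos _)
  have i3r : ∀ a b : ℝ, IntervalIntegrable
      (fun θ => Real.cos (G (π/2 - θ) + (π/2 - θ))) volume a b :=
    intInt_of_bdd m3r (fun x => bdcos _)
  have i4 : ∀ a b : ℝ, IntervalIntegrable (fun θ => 1 - Real.cos (G θ - θ)) volume a b :=
    intInt_of_bdd m4 bd4
  have i5 : ∀ a b : ℝ, IntervalIntegrable (fun θ => Real.cos (2*θ)) volume a b :=
    intInt_of_bdd m5 (fun x => bdcos _)
  -- Jensen with F = -sin
  have hconv : ConvexOn ℝ (Icc 0 π) (fun x : ℝ => -Real.sin x) := by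
    simpa [Pi.neg_def] using strictConcaveOn_sin_Icc.concaveOn.neg
  have hJ : (∫ θ in (0:ℝ)..π, Real.sin θ * Real.sin θ)
      ≤ ∫ θ in (0:ℝ)..π, Real.sin (H θ) * Real.sin θ := by
    have h := hjensen (fun x : ℝ => -Real.sin x) hconv
    simp only [neg_mul] at h
    rw [intervalIntegral.integral_neg, intervalIntegral.integral_neg] at h
    linarith
  have hHG : (∫ θ in (0:ℝ)..π, Real.sin (H θ) * Real.sin θ)
      = ∫ θ in (0:ℝ)..π, Real.sin (G θ) * Real.sin θ := by
    apply intervalIntegral.integral_congr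
    intro θ hθ
    rw [uIcc_of_le hπ.le] at hθ
    simp only
    rw [hGeq θ hθ]
  -- fold [0,π] to [0,π/2] by the reflection θ ↦ π - θ
  have refl_split : ∀ f : ℝ → ℝ, (∀ a b : ℝ, IntervalIntegrable f volume a b) →
      (∀ θ ∈ Icc (0:ℝ) (π/2), f (π - θ) = f θ) →
      (∫ θ in (0:ℝ)..π, f θ) = 2 * ∫ θ in (0:ℝ)..(π/2), f θ := by
    intro f hi hsymf
    have hsplit := intervalIntegral.integral_add_adjacent_intervals (hi 0 (π/2)) (hi (π/2) π)
    have hcs := intervalIntegral.integral_comp_sub_left (a := (0:ℝ)) (b := π/2) f π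
    rw [show π - π/2 = π/2 by ring, sub_zero] at hcs
    have hrefl : (∫ θ in (0:ℝ)..(π/2), f (π - θ)) = ∫ θ in (0:ℝ)..(π/2), f θ := by
      apply intervalIntegral.integral_congr
      intro θ hθ
      rw [uIcc_of_le h2] at hθ
      exact hsymf θ hθ
    rw [hrefl] at hcs
    linarith
  have hsym1 : ∀ θ ∈ Icc (0:ℝ) (π/2),
      Real.sin (G (π - θ)) * Real.sin (π - θ) = Real.sin (G θ) * Real.sin θ := by
    intro θ hθ
    have hθπ : θ ∈ Icc (0:ℝ) π := ⟨hθ.1, hθ.2.trans h2π⟩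
    have hθπ' : π - θ ∈ Icc (0:ℝ) π := ⟨by linarith [hθ.2], by linarith [hθ.1]⟩
    rw [hGeq _ hθπ', hsym θ hθπ, hGeq _ hθπ, Real.sin_pi_sub, Real.sin_pi_sub]
  have hsym2 : ∀ θ ∈ Icc (0:ℝ) (π/2),
      Real.sin (π - θ) * Real.sin (π - θ) = Real.sin θ * Real.sin θ := by
    intro θ _
    rw [Real.sin_pi_sub]
  have hfold1 := refl_split _ i1 hsym1
  have hfold2 := refl_split _ i2 hsym2
  -- hence  ∫₀^{π/2} sin²θ ≤ ∫₀^{π/2} sin(Gθ) sinθ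
  have hJhalf : (∫ θ in (0:ℝ)..(π/2), Real.sin θ * Real.sin θ)
      ≤ ∫ θ in (0:ℝ)..(π/2), Real.sin (G θ) * Real.sin θ := by
    rw [hHG, hfold1, hfold2] at hJ
    linarith
  -- pointwise trigonometric identity
  have key : ∀ θ : ℝ, Real.sin (G θ) * Real.sin θ =
      Real.sin θ * Real.sin θ + (-(1/2)) * (1 - Real.cos (G θ - θ))
        + (-(1/2)) * Real.cos (G θ + θ) + (1/2) * Real.cos (2*θ) := by
    intro θ
    rw [Real.cos_sub, Real.cos_add, Real.cos_two_mul]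
    nlinarith [Real.sin_sq_add_cos_sq θ]
  -- split the integral of the right-hand side
  set Q : ℝ := ∫ θ in (0:ℝ)..(π/2), (1 - Real.cos (G θ - θ)) with hQdef
  set P : ℝ := ∫ θ in (0:ℝ)..(π/2), Real.cos (G θ + θ) with hPdef
  have hR : (∫ θ in (0:ℝ)..(π/2), Real.cos (2*θ)) = 0 := by
    rw [intervalIntegral.integral_comp_mul_left (c := (2:ℝ)) (f := Real.cos) two_ne_zero]
    rw [show 2*(π/2) = π by ring]
    simp [integral_cos]
  have hsplit4 : (∫ θ in (0:ℝ)..(π/2), Real.sin (G θ) * Real.sin θ)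
      = (∫ θ in (0:ℝ)..(π/2), Real.sin θ * Real.sin θ) + (-(1/2)) * Q + (-(1/2)) * P
        + (1/2) * (∫ θ in (0:ℝ)..(π/2), Real.cos (2*θ)) := by
    have e1 : (∫ θ in (0:ℝ)..(π/2), Real.sin (G θ) * Real.sin θ)
        = ∫ θ in (0:ℝ)..(π/2), (Real.sin θ * Real.sin θ
            + (-(1/2)) * (1 - Real.cos (G θ - θ)) + (-(1/2)) * Real.cos (G θ + θ)
            + (1/2) * Real.cos (2*θ)) := by
      apply intervalIntegral.integral_congr
      intro θ _
      exact key θ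
    rw [e1]
    rw [intervalIntegral.integral_add (((i2 0 (π/2)).add ((i4 0 (π/2)).const_mul _)).add
          ((i3 0 (π/2)).const_mul _)) ((i5 0 (π/2)).const_mul _)]
    rw [intervalIntegral.integral_add ((i2 0 (π/2)).add ((i4 0 (π/2)).const_mul _))
          ((i3 0 (π/2)).const_mul _)]
    rw [intervalIntegral.integral_add (i2 0 (π/2)) ((i4 0 (π/2)).const_mul _)]
    rw [intervalIntegral.integral_const_mul, intervalIntegral.integral_const_mul,
        intervalIntegral.integral_const_mul]
  -- P ≥ 0 by the superadditivity pairing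
  have hpair : ∀ θ ∈ Icc (0:ℝ) (π/2),
      0 ≤ Real.cos (G θ + θ) + Real.cos (G (π/2 - θ) + (π/2 - θ)) := by
    intro θ hθ
    have hη : π/2 - θ ∈ Icc (0:ℝ) (π/2) := ⟨by linarith [hθ.2], by linarith [hθ.1]⟩
    have hθπ : θ ∈ Icc (0:ℝ) π := ⟨hθ.1, hθ.2.trans h2π⟩
    have hηπ : π/2 - θ ∈ Icc (0:ℝ) π := ⟨hη.1, hη.2.trans h2π⟩
    have hGθ : G θ = H θ := hGeq _ hθπ
    have hGη : G (π/2 - θ) = H (π/2 - θ) := hGeq _ hηπ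
    have hHθ := hHbd θ hθ
    have hHη := hHbd _ hη
    have hs := hsuper θ (π/2 - θ) hθπ hηπ (by rw [show θ + (π/2 - θ) = π/2 by ring]; exact hhalfmem)
    rw [show θ + (π/2 - θ) = π/2 by ring, hHhalf] at hs
    set A := G θ + θ with hA
    set B := G (π/2 - θ) + (π/2 - θ) with hB
    have hA0 : 0 ≤ A := by rw [hA, hGθ]; have := hHθ.1; linarith [hθ.1]
    have hBπ : B ≤ π := by rw [hB, hGη]; have := hHη.2; linarith [hη.2]
    have hB0 : 0 ≤ B := by
      rw [hB, hGη]; have := hHη.1; linarith [hη.1]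
    have hAB : A ≤ π - B := by
      rw [hA, hB, hGθ, hGη]; linarith
    have hcc : Real.cos (π - B) ≤ Real.cos A :=
      Real.cos_le_cos_of_nonneg_of_le_pi hA0 (by linarith) hAB
    rw [Real.cos_pi_sub] at hcc
    linarith
  have hPrefl : (∫ θ in (0:ℝ)..(π/2), Real.cos (G (π/2 - θ) + (π/2 - θ))) = P := by
    have hcs := intervalIntegral.integral_comp_sub_left (a := (0:ℝ)) (b := π/2)
      (fun x => Real.cos (G x + x)) (π/2)
    rw [sub_self, sub_zero] at hcs
    exact hcs
  have hPnn : 0 ≤ P := by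
    have hnn := intervalIntegral.integral_nonneg (μ := volume)
      (f := fun θ => Real.cos (G θ + θ) + Real.cos (G (π/2 - θ) + (π/2 - θ))) h2 hpair
    rw [intervalIntegral.integral_add (i3 0 (π/2)) (i3r 0 (π/2))] at hnn
    rw [hPrefl] at hnn
    linarith
  have hQnn : 0 ≤ Q := by
    apply intervalIntegral.integral_nonneg h2
    intro u _
    have := Real.cos_le_one (G u - u)
    linarith
  -- conclude Q = 0
  have hQ0 : Q = 0 := by
    rw [hR] at hsplit4
    have := hJhalf
    rw [hsplit4] at this
    linarith
  -- hence G θ = θ a.e. on (0, π/2)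
  have hae : (fun θ => 1 - Real.cos (G θ - θ)) =ᵐ[volume.restrict (Ioc 0 (π/2))] 0 := by
    refine (intervalIntegral.integral_eq_zero_iff_of_le_of_nonneg_ae h2 ?_ (i4 0 (π/2))).1 hQ0
    refine ae_of_all _ (fun u => ?_)
    have := Real.cos_le_one (G u - u)
    simp only [Pi.zero_apply]
    linarith
  have hNull : volume ({θ : ℝ | ¬ (1 - Real.cos (G θ - θ)) = 0} ∩ Ioc 0 (π/2)) = 0 := by
    have h := hae
    rw [Filter.EventuallyEq, ae_iff] at h
    simp only [Pi.zero_apply] at h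
    have hms : MeasurableSet {a : ℝ | ¬ (1 - Real.cos (G a - a)) = 0} :=
      (measurableSet_eq_fun m4 measurable_const).compl
    rwa [Measure.restrict_apply hms] at h
  -- a point with H t = t in every subinterval of (0, π/2]
  have hfind : ∀ u v : ℝ, 0 ≤ u → u < v → v ≤ π/2 → ∃ t, t ∈ Ioo u v ∧ H t = t := by
    intro u v hu huv hv
    by_contra hc
    push_neg at hc
    have hsub : Ioo u v ⊆ {θ : ℝ | ¬ (1 - Real.cos (G θ - θ)) = 0} ∩ Ioc 0 (π/2) := by
      intro t ht
      have htIcc : t ∈ Icc (0:ℝ) π := ⟨(hu.trans ht.1.le), (ht.2.le.trans (hv.trans h2π))⟩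
      have hGt : G t = H t := hGeq t htIcc
      constructor
      · intro h0
        have hcos : Real.cos (G t - t) = 1 := by linarith
        have hHt := hmaps htIcc
        have hb1 : -(2*π) < G t - t := by rw [hGt]; have := hHt.1; linarith [htIcc.2]
        have hb2 : G t - t < 2*π := by rw [hGt]; have := hHt.2; linarith [htIcc.1]
        have hzero : G t - t = 0 := (Real.cos_eq_one_iff_of_lt_of_lt hb1 hb2).1 hcos
        have : H t = t := by rw [← hGt]; linarith
        exact hc t ht this
      · exact ⟨lt_of_le_of_lt hu ht.1, ht.2.le.trans hv⟩
    have hnull2 : volume (Ioo u v) = 0 := measure_mono_null hsub hNull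
    rw [Real.volume_Ioo] at hnull2
    rw [ENNReal.ofReal_eq_zero] at hnull2
    linarith
  -- identity on [0, π/2]
  have hid : ∀ θ₀ ∈ Icc (0:ℝ) (π/2), H θ₀ = θ₀ := by
    intro θ₀ hθ₀
    have hθ₀π : θ₀ ∈ Icc (0:ℝ) π := ⟨hθ₀.1, hθ₀.2.trans h2π⟩
    rcases eq_or_lt_of_le hθ₀.1 with h0 | hpos
    · rw [← h0, hH0]
    have hge : θ₀ ≤ H θ₀ := by
      by_contra hlt
      push_neg at hlt
      obtain ⟨t, ht, hHt⟩ := hfind (H θ₀) θ₀ (hmaps hθ₀π).1 hlt hθ₀.2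
      have htIcc : t ∈ Icc (0:ℝ) π :=
        ⟨((hmaps hθ₀π).1.trans ht.1.le), (ht.2.le.trans hθ₀π.2)⟩
      have := hmono htIcc hθ₀π ht.2.le
      rw [hHt] at this
      linarith [ht.1]
    have hle : H θ₀ ≤ θ₀ := by
      rcases eq_or_lt_of_le hθ₀.2 with hhalf | hlt2
      · rw [hhalf, hHhalf]
      by_contra hgt
      push_neg at hgt
      obtain ⟨t, ht, hHt⟩ := hfind θ₀ (min (H θ₀) (π/2)) hθ₀.1
        (lt_min hgt hlt2) (min_le_right _ _)
      have htIcc : t ∈ Icc (0:ℝ) π :=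
        ⟨(hθ₀.1.trans ht.1.le), ((ht.2.le.trans (min_le_right _ _)).trans h2π)⟩
      have hmt := hmono hθ₀π htIcc ht.1.le
      rw [hHt] at hmt
      have : t < H θ₀ := lt_of_lt_of_le ht.2 (min_le_left _ _)
      linarith
    linarith
  -- conclude on all of [0, π]
  intro θ hθ
  rcases le_or_gt θ (π/2) with hle | hgt
  · exact hid θ ⟨hθ.1, hle⟩
  · have hθ' : π - θ ∈ Icc (0:ℝ) (π/2) := ⟨by linarith [hθ.2], by linarith⟩
    have hθ'' : π - θ ∈ Icc (0:ℝ) π := ⟨hθ'.1, hθ'.2.trans h2π⟩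
    have h1 := hsym (π - θ) hθ''
    rw [show π - (π - θ) = θ by ring] at h1
    rw [hid (π - θ) hθ'] at h1
    linarith
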